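/- arXiv:2408.04882 — 3 statements merged into one kernel-verified Lean document; each statement's English description precedes it below -/
import Mathlib

section
/- Let χ₂ ∈ (0, 1) and T∘ ≥ 0, let I ⊆ ℝ be an interval, let E ⊆ I be an arbitrary subset, and let a, b : I → ℝ be differentiable functions with a(t) ≥ 0 and b(t) ∈ [0, T∘] for all t ∈ I. Suppose that for every t ∈ E one has a′(t) ≤ 0 and b′(t) ≤ −(1 − χ₂), and for every t ∈ I \ E one has a′(t) ≤ −a(t) and b′(t) ≤ χ₂. Then for all s, t ∈ I with s ≤ t, a(t) ≤ e^{T∘} · e^{−(1 − χ₂)(t − s)} · a(s). -/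
/-- The exponential decay bound extracted from the proof of Proposition 1: `a` plays the role of
the Lyapunov function `V̂` along a flow, `b` plays the role of the monitor state `θ_{r+2}` which
remains in `[0, T∘]`, and `E` is the set of times at which the unknown control direction lies in
the bad set `ℰ_b`. Then `a(t) ≤ e^{T∘} e^{-(1 - χ₂)(t - s)} a(s)` for `s ≤ t` in `I`. -/
theorem monitored_lyapunov_exponential_bound (χ₂ T₀ : ℝ)
    (hχ : χ₂ ∈ Set.Ioo (0 : ℝ) 1) (hT₀ : 0 ≤ T₀)
    (I : Set ℝ) (hI : I.OrdConnected) (E : Set ℝ) (hE : E ⊆ I)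
    (a b : ℝ → ℝ)
    (ha : ∀ t ∈ I, DifferentiableAt ℝ a t)
    (hb : ∀ t ∈ I, DifferentiableAt ℝ b t)
    (ha0 : ∀ t ∈ I, 0 ≤ a t)
    (hb0 : ∀ t ∈ I, b t ∈ Set.Icc (0 : ℝ) T₀)
    (haE : ∀ t ∈ E, deriv a t ≤ 0)
    (hbE : ∀ t ∈ E, deriv b t ≤ -(1 - χ₂))
    (haI : ∀ t ∈ I \ E, deriv a t ≤ -a t)
    (hbI : ∀ t ∈ I \ E, deriv b t ≤ χ₂) :
    ∀ s ∈ I, ∀ t ∈ I, s ≤ t →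
      a t ≤ Real.exp T₀ * Real.exp (-(1 - χ₂) * (t - s)) * a s := by
  obtain ⟨hχ0, hχ1⟩ := hχ
  set c : ℝ := 1 - χ₂ with hc
  have hcpos : 0 < c := by simp only [hc]; linarith
  set h : ℝ → ℝ := fun t => a t * Real.exp (b t + c * t) with hh
  have H : ∀ t ∈ I, HasDerivAt h
      ((deriv a t + a t * (deriv b t + c)) * Real.exp (b t + c * t)) t := by
    intro t ht
    have hda := (ha t ht).hasDerivAt
    have hdb := (hb t ht).hasDerivAt
    have hlin : HasDerivAt (fun u : ℝ => b u + c * u) (deriv b t + c) t := by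
      have := hdb.add ((hasDerivAt_id t).const_mul c); simp at this; exact this
    have he := hlin.exp
    have : HasDerivAt (fun x => a x * Real.exp (b x + c * x)) _ t := hda.mul he
    convert this using 1
    ring
  have hconv : Convex ℝ I := hI.convex
  have hcont : ContinuousOn h I := fun t ht =>
    (((ha t ht).mul ((hb t ht).add ((differentiable_id.const_mul c) t)).exp).continuousAt).continuousWithinAt
  have hdiff : DifferentiableOn ℝ h (interior I) := fun t ht =>
    ((H t (interior_subset ht)).differentiableAt).differentiableWithinAt
  have hderiv : ∀ t ∈ interior I, deriv h t ≤ 0 := by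
    intro t ht
    have htI : t ∈ I := interior_subset ht
    rw [(H t htI).deriv]
    have hexp : 0 < Real.exp (b t + c * t) := Real.exp_pos _
    have hfac : deriv a t + a t * (deriv b t + c) ≤ 0 := by
      by_cases htE : t ∈ E
      · have h1 := haE t htE
        have h2 := hbE t htE
        have h3 := ha0 t htI
        nlinarith
      · have h1 := haI t ⟨htI, htE⟩
        have h2 := hbI t ⟨htI, htE⟩
        have h3 := ha0 t htI
        nlinarith
    exact mul_nonpos_of_nonpos_of_nonneg hfac hexp.le
  have hanti : AntitoneOn h I :=
    antitoneOn_of_deriv_nonpos hconv hcont hdiff hderiv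
  intro s hs t ht hst
  have key : h t ≤ h s := hanti hs ht hst
  have hbs := hb0 s hs
  have hbt := hb0 t ht
  have has0 := ha0 s hs
  have hat0 := ha0 t ht
  have hexp1 : 0 < Real.exp (-(b t + c * t)) := Real.exp_pos _
  calc a t = (a t * Real.exp (b t + c * t)) * Real.exp (-(b t + c * t)) := by
        rw [mul_assoc, ← Real.exp_add,
          show b t + c * t + -(b t + c * t) = 0 by ring, Real.exp_zero, mul_one]
    _ ≤ (a s * Real.exp (b s + c * s)) * Real.exp (-(b t + c * t)) :=
        mul_le_mul_of_nonneg_right key hexp1.le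
    _ = a s * Real.exp (b s + c * s - (b t + c * t)) := by
        rw [mul_assoc, ← Real.exp_add]; ring_nf
    _ ≤ a s * Real.exp (T₀ + -(1 - χ₂) * (t - s)) := by
        apply mul_le_mul_of_nonneg_left _ has0
        apply Real.exp_le_exp.2
        simp only [hc] at *
        nlinarith [hbs.1, hbs.2, hbt.1, hbt.2]
    _ = Real.exp T₀ * Real.exp (-(1 - χ₂) * (t - s)) * a s := by
        rw [Real.exp_add]; ring
end

section
/- Let S denote the 2×2 real matrix with first row (0, 1) and second row (−1, 0). Let γ > 0, let ϑ⋆ ∈ ℝ² with ‖ϑ⋆‖ = 1, let I ⊆ ℝ be an interval, and let p : I → ℝ² be differentiable with ‖p(t)‖ = 1 and p′(t) = γ ⟨ϑ⋆, S p(t)⟩ · S p(t) for all t ∈ I. Then w(t) := 1 − ⟨ϑ⋆, p(t)⟩ satisfies w′(t) = −γ · w(t) · (2 − w(t)) for all t ∈ I. -/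
/-- The 2×2 rotation generator with first row `(0, 1)` and second row `(-1, 0)`. -/
noncomputable def Smat : Matrix (Fin 2) (Fin 2) ℝ := !![0, 1; -1, 0]

open RealInnerProductSpace in
/-- Along solutions of the Lie-bracket averaged closed loop `ṗ = γ⟨ϑ⋆, Sp⟩Sp` on the unit
circle, the potential `W(p) = 1 - ⟨ϑ⋆, p⟩` obeys the logistic-type decrease law
`Ẇ = -γ W (2 - W)`. -/
theorem circle_averaged_flow_potential_ode (γ : ℝ) (hγ : 0 < γ)
    (θs : EuclideanSpace ℝ (Fin 2)) (hθs : ‖θs‖ = 1)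
    (I : Set ℝ) (hI : I.OrdConnected)
    (p : ℝ → EuclideanSpace ℝ (Fin 2))
    (hp1 : ∀ t ∈ I, ‖p t‖ = 1)
    (hp2 : ∀ t ∈ I, HasDerivAt p
      ((γ * ⟪θs, Matrix.toEuclideanLin Smat (p t)⟫) • Matrix.toEuclideanLin Smat (p t)) t)
    (w : ℝ → ℝ) (hw : ∀ t, w t = 1 - ⟪θs, p t⟫) :
    ∀ t ∈ I, HasDerivAt w (-γ * w t * (2 - w t)) t := by
  intro t ht
  set Sp := Matrix.toEuclideanLin Smat (p t) with hSp
  have hd := hp2 t ht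
  have hin : HasDerivAt (fun s => ⟪θs, p s⟫)
      (⟪θs, (γ * ⟪θs, Sp⟫) • Sp⟫ + ⟪(0 : EuclideanSpace ℝ (Fin 2)), p t⟫) t :=
    (hasDerivAt_const t θs).inner ℝ hd
  have hwd : HasDerivAt w (-(⟪θs, (γ * ⟪θs, Sp⟫) • Sp⟫ + ⟪(0 : EuclideanSpace ℝ (Fin 2)), p t⟫)) t := by
    have : w = fun s => 1 - ⟪θs, p s⟫ := funext hw
    rw [this]
    simpa using hin.const_sub 1
  convert hwd using 1
  have hb : ⟪θs, Sp⟫ = θs 0 * p t 1 - θs 1 * p t 0 := by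
    simp [hSp, Matrix.toEuclideanLin_apply, PiLp.inner_apply, Smat, Matrix.mulVec, dotProduct,
      Fin.sum_univ_two, Matrix.cons_val_zero, Matrix.cons_val_one, Matrix.vecHead, Matrix.vecTail]
    ring
  have ha : ⟪θs, p t⟫ = θs 0 * p t 0 + θs 1 * p t 1 := by
    simp [PiLp.inner_apply, Fin.sum_univ_two]
    ring
  have hnθ : θs 0 ^ 2 + θs 1 ^ 2 = 1 := by
    have := hθs
    rw [EuclideanSpace.norm_eq] at this
    have h2 : Real.sqrt (∑ i, ‖θs i‖^2) = 1 := by simpa [Fin.sum_univ_two] using this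
    have := Real.sqrt_eq_one.mp h2
    simpa [Fin.sum_univ_two, sq_abs, Real.norm_eq_abs] using this
  have hnp : p t 0 ^ 2 + p t 1 ^ 2 = 1 := by
    have := hp1 t ht
    rw [EuclideanSpace.norm_eq] at this
    have h2 : Real.sqrt (∑ i, ‖p t i‖^2) = 1 := by simpa [Fin.sum_univ_two] using this
    have := Real.sqrt_eq_one.mp h2
    simpa [Fin.sum_univ_two, sq_abs, Real.norm_eq_abs] using this
  rw [hw t]
  simp only [inner_zero_left, add_zero, real_inner_smul_right]
  rw [hb, ha]
  have key : (θs 0 * p t 1 - θs 1 * p t 0)^2 + (θs 0 * p t 0 + θs 1 * p t 1)^2 = 1 := by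
    have h : (θs 0 * p t 1 - θs 1 * p t 0)^2 + (θs 0 * p t 0 + θs 1 * p t 1)^2
        = (θs 0^2 + θs 1^2) * (p t 0^2 + p t 1^2) := by ring
    rw [h, hnθ, hnp]; ring
  linear_combination γ * key
end

section
/- Let γ > 0, let p⋆ ∈ ℝ³ with ‖p⋆‖ = 1, let e₁, e₂, e₃ be the standard basis of ℝ³, define bᵢ(p) := eᵢ − ⟨p, eᵢ⟩p, let I ⊆ ℝ be an interval, and let p : I → ℝ³ be differentiable with ‖p(t)‖ = 1 and p′(t) = γ Σᵢ₌₁³ ⟨p⋆, bᵢ(p(t))⟩ · bᵢ(p(t)) for all t ∈ I. Then w(t) := 1 − ⟨p(t), p⋆⟩ satisfies w′(t) = −γ · w(t) · (2 − w(t)) for all t ∈ I. -/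
open RealInnerProductSpace in
/-- Along solutions of the Lie-bracket averaged closed loop
`ṗ = γ Σᵢ ⟨p⋆, bᵢ(p)⟩ bᵢ(p)`, with `bᵢ(p) = eᵢ - ⟨p, eᵢ⟩p`, on the unit sphere `S² ⊂ ℝ³`, the
potential `W(p) = 1 - ⟨p, p⋆⟩` obeys the logistic-type decrease law `Ẇ = -γ W (2 - W)`. -/
theorem sphere_averaged_flow_potential_ode (γ : ℝ) (hγ : 0 < γ)
    (ps : EuclideanSpace ℝ (Fin 3)) (hps : ‖ps‖ = 1)
    (b : EuclideanSpace ℝ (Fin 3) → Fin 3 → EuclideanSpace ℝ (Fin 3))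
    (hb : ∀ x i, b x i = EuclideanSpace.single i (1 : ℝ)
      - ⟪x, EuclideanSpace.single i (1 : ℝ)⟫ • x)
    (I : Set ℝ) (hI : I.OrdConnected)
    (p : ℝ → EuclideanSpace ℝ (Fin 3))
    (hp1 : ∀ t ∈ I, ‖p t‖ = 1)
    (hp2 : ∀ t ∈ I, HasDerivAt p (γ • ∑ i : Fin 3, (⟪ps, b (p t) i⟫) • b (p t) i) t)
    (w : ℝ → ℝ) (hw : ∀ t, w t = 1 - ⟪p t, ps⟫) :
    ∀ t ∈ I, HasDerivAt w (-γ * w t * (2 - w t)) t := by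
  intro t ht
  set c : ℝ := ⟪ps, p t⟫ with hc
  have hps2 : (⟪ps, ps⟫ : ℝ) = 1 := by
    rw [real_inner_self_eq_norm_sq, hps]; norm_num
  have hpt2 : (⟪p t, p t⟫ : ℝ) = 1 := by
    rw [real_inner_self_eq_norm_sq, hp1 t ht]; norm_num
  have hbi : ∀ i : Fin 3, (⟪ps, b (p t) i⟫ : ℝ) = ps i - p t i * c := by
    intro i
    rw [hb, inner_sub_right, real_inner_smul_right]
    have h1 : (⟪ps, EuclideanSpace.single i (1:ℝ)⟫ : ℝ) = ps i := by
      simp [PiLp.inner_apply, EuclideanSpace.single_apply]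
    have h2 : (⟪p t, EuclideanSpace.single i (1:ℝ)⟫ : ℝ) = p t i := by
      simp [PiLp.inner_apply, EuclideanSpace.single_apply]
    rw [h1, h2, hc]
  have hsum : ∑ i : Fin 3, (⟪ps, b (p t) i⟫ : ℝ) ^ 2 = 1 - c ^ 2 := by
    simp_rw [hbi]
    have e1 : ∑ i : Fin 3, ps i * ps i = 1 := by
      have := hps2; rw [PiLp.inner_apply] at this; simpa [sq] using this
    have e2 : ∑ i : Fin 3, p t i * p t i = 1 := by
      have := hpt2; rw [PiLp.inner_apply] at this; simpa [sq] using this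
    have e3 : ∑ i : Fin 3, ps i * p t i = c := by
      rw [hc, PiLp.inner_apply]; simp [mul_comm]
    rw [Fin.sum_univ_three] at e1 e2 e3 ⊢
    linear_combination e1 + c ^ 2 * e2 - 2 * c * e3
  have key : (⟪ps, γ • ∑ i : Fin 3, (⟪ps, b (p t) i⟫ : ℝ) • b (p t) i⟫ : ℝ)
      = γ * (1 - c ^ 2) := by
    rw [real_inner_smul_right, inner_sum]
    congr 1
    rw [← hsum]
    refine Finset.sum_congr rfl fun i _ => ?_
    rw [real_inner_smul_right]; ring
  have hder : HasDerivAt (fun s => (⟪ps, p s⟫ : ℝ)) (γ * (1 - c ^ 2)) t := by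
    have h := (innerSL ℝ ps).hasFDerivAt.comp_hasDerivAt t (hp2 t ht)
    simpa only [Function.comp_def, innerSL_apply_apply, key] using h
  have hw' : w = fun s => 1 - (⟪ps, p s⟫ : ℝ) := by
    funext s; rw [hw s, real_inner_comm]
  have hfin : HasDerivAt w (-(γ * (1 - c ^ 2))) t := by
    rw [hw']; exact (hder.const_sub 1)
  convert hfin using 1
  rw [hw t, real_inner_comm, ← hc]
  ring
end
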